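/- arXiv:2006.09802 — 4 statements merged into one kernel-verified Lean document; each statement's English description precedes it below -/
import Mathlib

section
/- Let U = {u⁽¹⁾, …, u⁽ᵐ⁾} ⊆ ℤ^d be finite and non-empty, and define ū ∈ ℤ^d by ū_i = max_j u⁽ʲ⁾_i. Fix a line L = {c + t·v : t ∈ ℝ} ∩ ℕ^d in ℕ^d through a point c and direction v ∈ ℤ^d \ {0}, with c ≥ ū componentwise. Then the intersection of L with the upward closure of U, {x ∈ ℕ^d : ∃ j, x ≥ u⁽ʲ⁾}, is non-empty and is an interval of the line: if x, z are in the intersection and y ∈ L lies between x and z (i.e., y = x + s·v, z = x + t·v with 0 ≤ s ≤ t), then y is in the intersection. -/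
theorem line_inter_upward_closure_is_interval (d : ℕ) (U : Finset (Fin d → ℤ))
    (hU : U.Nonempty) (c : Fin d → ℕ) (v : Fin d → ℤ) (hv : v ≠ 0)
    (hc : ∀ u ∈ U, ∀ i, u i ≤ (c i : ℤ)) :
    (({x : Fin d → ℕ | ∃ t : ℝ, ∀ i, (x i : ℝ) = (c i : ℝ) + t * (v i : ℝ)} ∩
        {x : Fin d → ℕ | ∃ u ∈ U, ∀ i, u i ≤ (x i : ℤ)}).Nonempty) ∧
    (∀ x ∈ {x : Fin d → ℕ | ∃ t : ℝ, ∀ i, (x i : ℝ) = (c i : ℝ) + t * (v i : ℝ)} ∩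
        {x : Fin d → ℕ | ∃ u ∈ U, ∀ i, u i ≤ (x i : ℤ)},
     ∀ z ∈ {x : Fin d → ℕ | ∃ t : ℝ, ∀ i, (x i : ℝ) = (c i : ℝ) + t * (v i : ℝ)} ∩
        {x : Fin d → ℕ | ∃ u ∈ U, ∀ i, u i ≤ (x i : ℤ)},
     ∀ y ∈ {x : Fin d → ℕ | ∃ t : ℝ, ∀ i, (x i : ℝ) = (c i : ℝ) + t * (v i : ℝ)},
     ∀ s t : ℝ, 0 ≤ s → s ≤ t →
       (∀ i, (y i : ℝ) = (x i : ℝ) + s * (v i : ℝ)) →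
       (∀ i, (z i : ℝ) = (x i : ℝ) + t * (v i : ℝ)) →
       y ∈ {x : Fin d → ℕ | ∃ u ∈ U, ∀ i, u i ≤ (x i : ℤ)}) := by
  obtain ⟨u0, hu0⟩ := hU
  constructor
  · exact ⟨c, ⟨0, fun i => by ring⟩, u0, hu0, fun i => hc u0 hu0 i⟩
  · rintro x ⟨⟨px, hpx⟩, ux, hux, hux2⟩ z ⟨⟨pz, hpz⟩, uz, huz, huz2⟩ y ⟨r, hr⟩ s t hs hst hy hz
    rcases le_or_gt 0 r with hr0 | hr0
    · refine ⟨uz, huz, fun i => ?_⟩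
      have h1 : (uz i : ℝ) ≤ (y i : ℝ) := by
        rcases le_or_gt 0 (v i : ℝ) with hvi | hvi
        · have h2 : (uz i : ℝ) ≤ (c i : ℝ) := by exact_mod_cast hc uz huz i
          rw [hr i]; nlinarith
        · have h2 : (uz i : ℝ) ≤ (z i : ℝ) := by exact_mod_cast huz2 i
          rw [hy i]; rw [hz i] at h2; nlinarith
      exact_mod_cast h1
    · refine ⟨ux, hux, fun i => ?_⟩
      have h1 : (ux i : ℝ) ≤ (y i : ℝ) := by
        rcases le_or_gt 0 (v i : ℝ) with hvi | hvi
        · have h2 : (ux i : ℝ) ≤ (x i : ℝ) := by exact_mod_cast hux2 i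
          rw [hy i]; nlinarith
        · have h2 : (ux i : ℝ) ≤ (c i : ℝ) := by exact_mod_cast hc ux hux i
          rw [hr i]; nlinarith
      exact_mod_cast h1
end

section
/- Let d = 2 and suppose the input set ℐ ⊆ ℕ² and output set 𝒪 ⊆ ℕ² are finite and non-empty. Then the set 𝒪̄ \ ℐ̄ is finite if and only if min{x₁ : x ∈ 𝒪} ≥ min{y₁ : y ∈ ℐ} and min{x₂ : x ∈ 𝒪} ≥ min{y₂ : y ∈ ℐ}. -/
theorem trapping_finite_iff_min_d2 (I O : Finset (Fin 2 → ℕ))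
    (hI : I.Nonempty) (hO : O.Nonempty) :
    ({x : Fin 2 → ℕ | ∃ y ∈ O, y ≤ x} \ {x : Fin 2 → ℕ | ∃ y ∈ I, y ≤ x}).Finite ↔
      ∀ j : Fin 2,
        (I.image fun y => y j).min' (hI.image _) ≤
          (O.image fun x => x j).min' (hO.image _) := by
  constructor
  · intro hfin j
    by_contra h
    push_neg at h
    -- h : minO j < minI j
    obtain ⟨x₀, hx₀O, hx₀j⟩ : ∃ x₀ ∈ O, x₀ j = (O.image fun x => x j).min' (hO.image _) := by
      have := (O.image fun x => x j).min'_mem (hO.image _)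
      rw [Finset.mem_image] at this
      obtain ⟨a, ha, ha'⟩ := this
      exact ⟨a, ha, ha'⟩
    have hjj : (j + 1 : Fin 2) ≠ j := by fin_cases j <;> decide
    have hinj : Function.Injective
        (fun n : ℕ => fun i => if i = j then x₀ j else x₀ i + n) := by
      intro n m hnm
      have := congrFun hnm (j + 1)
      simp only [if_neg hjj] at this
      exact Nat.add_left_cancel this
    have hmem : ∀ n, (fun i => if i = j then x₀ j else x₀ i + n) ∈
        ({x : Fin 2 → ℕ | ∃ y ∈ O, y ≤ x} \ {x : Fin 2 → ℕ | ∃ y ∈ I, y ≤ x}) := by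
      intro n
      constructor
      · refine ⟨x₀, hx₀O, fun i => ?_⟩
        by_cases hi : i = j
        · subst hi; simp
        · simp [if_neg hi]
      · rintro ⟨y, hyI, hyle⟩
        have h1 : (I.image fun y => y j).min' (hI.image _) ≤ y j :=
          Finset.min'_le _ _ (Finset.mem_image_of_mem _ hyI)
        have h2 := hyle j
        simp only [if_pos rfl] at h2
        exact absurd (h1.trans (h2.trans_eq hx₀j)) (not_le.2 h)
    exact (Set.infinite_of_injective_forall_mem hinj hmem) hfin
  · intro hmin
    set M := I.sup (fun y => max (y 0) (y 1)) with hM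
    apply Set.Finite.subset (Set.finite_Icc (0 : Fin 2 → ℕ) (fun _ => M))
    rintro x ⟨⟨z, hzO, hzx⟩, hxnI⟩
    refine ⟨fun i => Nat.zero_le _, fun i => ?_⟩
    by_contra hxi
    push_neg at hxi
    -- hxi : M < x i
    obtain ⟨y, hyI, hyj⟩ : ∃ y ∈ I, y (i + 1) = (I.image fun y => y (i + 1)).min'
        (hI.image _) := by
      have := (I.image fun y => y (i + 1)).min'_mem (hI.image _)
      rw [Finset.mem_image] at this
      obtain ⟨a, ha, ha'⟩ := this
      exact ⟨a, ha, ha'⟩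
    apply hxnI
    refine ⟨y, hyI, fun k => ?_⟩
    have hk : k = i ∨ k = i + 1 := by fin_cases i <;> fin_cases k <;> simp
    rcases hk with hk | hk
    · subst hk
      have h1 : y k ≤ max (y 0) (y 1) := by fin_cases k <;> simp
      have h2 : max (y 0) (y 1) ≤ M := Finset.le_sup (f := fun y => max (y 0) (y 1)) hyI
      exact (h1.trans h2).trans hxi.le
    · subst hk
      have h1 : (O.image fun x => x (i + 1)).min' (hO.image _) ≤ z (i + 1) :=
        Finset.min'_le _ _ (Finset.mem_image_of_mem _ hzO)
      have h2 := hzx (i + 1)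
      have h3 := hmin (i + 1)
      exact hyj ▸ (h3.trans (h1.trans h2))
end

section
/- Let ℐ, 𝒪 be finite non-empty subsets of ℕ^d. Then 𝒪̄ \ ℐ̄ is finite if and only if for every j ∈ {1,…,d} and every x ∈ 𝒪 there exists y ∈ ℐ such that x_k ≥ y_k for all k ≠ j. -/
theorem trapping_finite_iff_projection (d : ℕ) (I O : Finset (Fin d → ℕ))
    (hI : I.Nonempty) (hO : O.Nonempty) :
    ({x : Fin d → ℕ | ∃ y ∈ O, y ≤ x} \ {x : Fin d → ℕ | ∃ y ∈ I, y ≤ x}).Finite ↔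
      ∀ j : Fin d, ∀ x ∈ O, ∃ y ∈ I, ∀ k, k ≠ j → y k ≤ x k := by
  constructor
  · intro hfin j x hx
    by_contra h
    push_neg at h
    have key : ∀ n : ℕ, Function.update x j (x j + n) ∈
        ({x : Fin d → ℕ | ∃ y ∈ O, y ≤ x} \ {x : Fin d → ℕ | ∃ y ∈ I, y ≤ x}) := by
      intro n
      constructor
      · refine ⟨x, hx, fun k => ?_⟩
        by_cases hk : k = j
        · subst hk; simp [Function.update]
        · simp [Function.update, hk]
      · rintro ⟨y, hy, hle⟩
        obtain ⟨k, hk, hlt⟩ := h y hy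
        have := hle k
        rw [Function.update_of_ne hk] at this
        exact absurd this (not_le.mpr hlt)
    have hinj : Function.Injective (fun n : ℕ => Function.update x j (x j + n)) := by
      intro a b hab
      have := congrFun hab j
      simpa [Function.update] using this
    exact Set.infinite_of_injective_forall_mem hinj key hfin
  · intro h
    set B : Fin d → ℕ := fun j => I.sup fun y => y j with hB
    refine Set.Finite.subset (Set.finite_Iic B) ?_
    rintro z ⟨⟨x, hx, hxz⟩, hz⟩
    intro j
    obtain ⟨y, hy, hyk⟩ := h j x hx
    by_contra hzj
    push_neg at hzj
    apply hz
    refine ⟨y, hy, fun k => ?_⟩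
    by_cases hk : k = j
    · subst hk
      exact le_trans (Finset.le_sup (f := fun y => y k) hy) (le_of_lt hzj)
    · exact le_trans (hyk k hk) (hxz k)
end

section
/- Let Q and Q̃ be Markov jump structures on ℕ^d with jump sets 𝒯̃ ⊆ 𝒯 and upward-closed activity sets ℐ̄_ω (for Q) and 𝒥̄_ω (for Q̃). Assume (i) 𝒥̄_ω = ℐ̄_ω for all ω ∈ 𝒯̃, and (ii) for every ω ∈ 𝒯 \ 𝒯̃ there is ω̃ ∈ 𝒯̃ and k ∈ ℕ, k ≥ 1, with ω = k • ω̃, such that x ∈ ℐ̄_ω implies x + j • ω̃ ∈ ℐ̄_ω̃ for all j = 0, …, k−1. Then the reachability relations of Q and Q̃ coincide: for all x, y ∈ ℕ^d, x ⇀* y in Q iff x ⇀* y in Q̃. -/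
theorem structural_equivalence (d : ℕ)
    (T Tt : Set (Fin d → ℤ)) (hsub : Tt ⊆ T)
    (I J : (Fin d → ℤ) → Set (Fin d → ℕ))
    (hup : ∀ ω ∈ T, ∀ x y : Fin d → ℕ, x ≤ y → x ∈ I ω → y ∈ I ω)
    (hi : ∀ ω ∈ Tt, J ω = I ω)
    (hii : ∀ ω ∈ T \ Tt, ∃ ωt ∈ Tt, ∃ k : ℕ, 1 ≤ k ∧ ω = k • ωt ∧
      ∀ x ∈ I ω, ∀ j : ℕ, j < k →
        ∃ z : Fin d → ℕ, (∀ i, (z i : ℤ) = (x i : ℤ) + (j • ωt) i) ∧ z ∈ I ωt) :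
    ∀ x y : Fin d → ℕ,
      Relation.ReflTransGen
        (fun a b => ∃ ω ∈ T, a ∈ I ω ∧ ∀ i, (b i : ℤ) = (a i : ℤ) + ω i) x y ↔
      Relation.ReflTransGen
        (fun a b => ∃ ω ∈ Tt, a ∈ J ω ∧ ∀ i, (b i : ℤ) = (a i : ℤ) + ω i) x y := by
  intro x y
  set R := fun a b : Fin d → ℕ => ∃ ω ∈ T, a ∈ I ω ∧ ∀ i, (b i : ℤ) = (a i : ℤ) + ω i
  set Rt := fun a b : Fin d → ℕ => ∃ ω ∈ Tt, a ∈ J ω ∧ ∀ i, (b i : ℤ) = (a i : ℤ) + ω i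
  constructor
  · intro h
    induction h with
    | refl => exact .refl
    | tail _ hab ih =>
      rename_i b c _
      refine ih.trans ?_
      obtain ⟨ω, hωT, hbI, hc⟩ := hab
      by_cases hωt : ω ∈ Tt
      · exact Relation.ReflTransGen.single ⟨ω, hωt, by rwa [hi ω hωt], hc⟩
      · obtain ⟨ωt, hωtTt, k, hk1, hkω, hz⟩ := hii ω ⟨hωT, hωt⟩
        -- chain of intermediate states
        have key : ∀ j : ℕ, j < k → ∃ z : Fin d → ℕ,
            (∀ i, (z i : ℤ) = (b i : ℤ) + (j • ωt) i) ∧ z ∈ I ωt ∧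
            Relation.ReflTransGen Rt b z := by
          intro j
          induction j with
          | zero =>
            intro hj
            obtain ⟨z, hzv, hzI⟩ := hz b hbI 0 hj
            have hzb : z = b := by
              funext i
              have := hzv i
              simp [Pi.smul_apply] at this
              exact_mod_cast this
            exact ⟨z, hzv, hzI, hzb ▸ Relation.ReflTransGen.refl⟩
          | succ j ihj =>
            intro hj
            obtain ⟨z, hzv, hzI, hreach⟩ := ihj (Nat.lt_of_succ_lt hj)
            obtain ⟨z', hz'v, hz'I⟩ := hz b hbI (j + 1) hj
            refine ⟨z', hz'v, hz'I, hreach.tail ?_⟩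
            refine ⟨ωt, hωtTt, by rwa [hi ωt hωtTt], ?_⟩
            intro i
            have h1 := hzv i
            have h2 := hz'v i
            simp only [Pi.smul_apply, nsmul_eq_mul] at h1 h2 ⊢
            push_cast at h1 h2 ⊢
            rw [h2, h1]; ring
        obtain ⟨z, hzv, hzI, hreach⟩ := key (k - 1) (by omega)
        refine hreach.tail ⟨ωt, hωtTt, by rwa [hi ωt hωtTt], ?_⟩
        intro i
        have h1 := hzv i
        have h2 := hc i
        rw [hkω] at h2
        simp only [Pi.smul_apply, nsmul_eq_mul] at h1 h2 ⊢
        have hk' : ((k : ℤ)) = ((k - 1 : ℕ) : ℤ) + 1 := by omega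
        rw [h2, h1, hk']; ring
  · intro h
    induction h with
    | refl => exact .refl
    | tail _ hab ih =>
      obtain ⟨ω, hωTt, hbJ, hc⟩ := hab
      exact ih.tail ⟨ω, hsub hωTt, by rwa [hi ω hωTt] at hbJ, hc⟩
end
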